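/- arXiv:1307.6478 — 2 statements merged into one kernel-verified Lean document; each statement's English description precedes it below -/
import Mathlib

section
/- Let G and H be topological groups with H ⊆ G a subgroup of index 2, and let x ∈ G ∖ H. Let r be a continuous finite-dimensional irreducible complex representation of H, and define its twist r^x by r^x(h) = r(x h x^{−1}). Then r extends to a continuous representation of G (i.e., there exists a continuous representation ρ of G on the same space with ρ|_H = r) if and only if r is isomorphic to r^x. -/
/-- A (finite-dimensional, matrix) representation of a group `G` is irreducible if the
underlying space is nonzero and the only invariant subspaces are `⊥` and `⊤`. -/
def MatIrred {G ι : Type*} [Group G] [Fintype ι] [DecidableEq ι]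
    (r : G →* Matrix ι ι ℂ) : Prop :=
  Nonempty ι ∧ ∀ U : Submodule ℂ (ι → ℂ),
    (∀ g : G, ∀ v ∈ U, (r g).mulVec v ∈ U) → U = ⊥ ∨ U = ⊤

/-- `r` is isomorphic to its twist `r^x`, where `r^x (h) = r (x * h * x⁻¹)`:  there is an
invertible intertwining matrix `P` with `r^x (h) * P = P * r h` for all `h ∈ H`. -/
def TwistIso {G : Type*} [Group G] (H : Subgroup G) (x : G) {ι : Type*} [Fintype ι]
    [DecidableEq ι] (r : ↥H →* Matrix ι ι ℂ) : Prop :=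
  ∃ P : Matrix ι ι ℂ, IsUnit P ∧
    ∀ (h : G) (hh : h ∈ H) (hh' : x * h * x⁻¹ ∈ H),
      r ⟨x * h * x⁻¹, hh'⟩ * P = P * r ⟨h, hh⟩


open Filter Topology

section AuxMembership

variable {G : Type*} [Group G] {H : Subgroup G} {x : G}

lemma inv_not_mem' (hx : x ∉ H) : x⁻¹ ∉ H := fun h => hx (by simpa using inv_mem h)

lemma mul_xinv_mem (hH : H.index = 2) (hx : x ∉ H) {g : G} (hg : g ∉ H) : g * x⁻¹ ∈ H := by
  rw [Subgroup.mul_mem_iff_of_index_two hH]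
  exact iff_of_false hg (inv_not_mem' hx)

lemma conj_mem (hH : H.index = 2) (hx : x ∉ H) {h : G} (hh : h ∈ H) : x * h * x⁻¹ ∈ H := by
  rw [mul_assoc, Subgroup.mul_mem_iff_of_index_two hH,
    Subgroup.mul_mem_iff_of_index_two hH]
  simp [hx, hh, inv_not_mem' hx]

lemma not_mem_mul₁ {a b : G} (ha : a ∈ H) (hb : b ∉ H) : a * b ∉ H := fun hab =>
  hb (by simpa using mul_mem (inv_mem ha) hab)

lemma not_mem_mul₂ {a b : G} (ha : a ∉ H) (hb : b ∈ H) : a * b ∉ H := fun hab =>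
  ha (by simpa using mul_mem hab (inv_mem hb))

lemma mem_mul_of_not_mem (hH : H.index = 2) {a b : G} (ha : a ∉ H) (hb : b ∉ H) : a * b ∈ H := by
  rw [Subgroup.mul_mem_iff_of_index_two hH]; exact iff_of_false ha hb

end AuxMembership

/-- Schur: a matrix commuting with an irreducible representation is scalar. -/
lemma schur_scalar {G : Type*} [Group G] {n : ℕ} (r : G →* Matrix (Fin n) (Fin n) ℂ)
    (hirr : MatIrred r) (A : Matrix (Fin n) (Fin n) ℂ)
    (hA : ∀ g : G, A * r g = r g * A) : ∃ c : ℂ, A = c • (1 : Matrix (Fin n) (Fin n) ℂ) := by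
  haveI : Nonempty (Fin n) := hirr.1
  haveI : Nontrivial (Fin n → ℂ) := Function.nontrivial
  obtain ⟨c, hc⟩ := Module.End.exists_eigenvalue (Matrix.mulVecLin A)
  set U := Module.End.eigenspace (Matrix.mulVecLin A) c with hU
  have hinv : ∀ g : G, ∀ v ∈ U, (r g).mulVec v ∈ U := by
    intro g v hv
    rw [Module.End.mem_eigenspace_iff] at hv ⊢
    rw [Matrix.mulVecLin_apply] at hv ⊢
    rw [Matrix.mulVec_mulVec, hA g, ← Matrix.mulVec_mulVec, hv, Matrix.mulVec_smul]
  have := hirr.2 U hinv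
  have hUtop : U = ⊤ := this.resolve_left hc
  refine ⟨c, ?_⟩
  have hall : ∀ v : Fin n → ℂ, A.mulVec v = c • v := by
    intro v
    have hv : v ∈ U := hUtop ▸ Submodule.mem_top
    rw [Module.End.mem_eigenspace_iff, Matrix.mulVecLin_apply] at hv
    exact hv
  apply Matrix.toLin'.injective
  refine LinearMap.ext fun v => ?_
  rw [Matrix.toLin'_apply, Matrix.toLin'_apply, hall v, Matrix.smul_mulVec,
    Matrix.one_mulVec]

noncomputable def NN {n : ℕ} (A : Matrix (Fin n) (Fin n) ℂ) : ℝ :=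
  ∑ i, ∑ j, ‖A i j‖

lemma NN_nonneg {n : ℕ} (A : Matrix (Fin n) (Fin n) ℂ) : 0 ≤ NN A :=
  Finset.sum_nonneg fun _ _ => Finset.sum_nonneg fun _ _ => norm_nonneg _

lemma NN_entry_le {n : ℕ} (A : Matrix (Fin n) (Fin n) ℂ) (i j : Fin n) :
    ‖A i j‖ ≤ NN A := by
  refine le_trans ?_ (Finset.single_le_sum (f := fun i => ∑ j, ‖A i j‖)
    (fun _ _ => Finset.sum_nonneg fun _ _ => norm_nonneg _) (Finset.mem_univ i))
  exact Finset.single_le_sum (f := fun j => ‖A i j‖)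
    (fun _ _ => norm_nonneg _) (Finset.mem_univ j)

lemma NN_mul_le {n : ℕ} (A B : Matrix (Fin n) (Fin n) ℂ) : NN (A * B) ≤ NN A * NN B := by
  have h1 : NN (A * B) ≤ ∑ i, ∑ j, ∑ k, ‖A i k‖ * ‖B k j‖ := by
    refine Finset.sum_le_sum fun i _ => Finset.sum_le_sum fun j _ => ?_
    rw [Matrix.mul_apply]
    refine le_trans (norm_sum_le _ _) ?_
    exact le_of_eq (Finset.sum_congr rfl fun k _ => norm_mul _ _)
  refine h1.trans ?_
  have h2 : ∀ i, ∑ j, ∑ k, ‖A i k‖ * ‖B k j‖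
      = ∑ k, ‖A i k‖ * ∑ j, ‖B k j‖ := by
    intro i
    rw [Finset.sum_comm]
    exact Finset.sum_congr rfl fun k _ => (Finset.mul_sum _ _ _).symm
  calc ∑ i, ∑ j, ∑ k, ‖A i k‖ * ‖B k j‖
      = ∑ i, ∑ k, ‖A i k‖ * ∑ j, ‖B k j‖ :=
        Finset.sum_congr rfl fun i _ => h2 i
    _ ≤ ∑ i, ∑ k, ‖A i k‖ * NN B := by
        refine Finset.sum_le_sum fun i _ => Finset.sum_le_sum fun k _ => ?_
        refine mul_le_mul_of_nonneg_left ?_ (norm_nonneg _)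
        refine Finset.single_le_sum (f := fun k => ∑ j, ‖B k j‖)
          (fun _ _ => Finset.sum_nonneg fun _ _ => norm_nonneg _) (Finset.mem_univ k)
    _ = NN A * NN B := by
        rw [NN, NN, Finset.sum_mul]
        exact Finset.sum_congr rfl fun i _ => (Finset.sum_mul _ _ _).symm

lemma NN_continuous {n : ℕ} : Continuous (NN (n := n)) := by
  refine continuous_finset_sum _ fun i _ => continuous_finset_sum _ fun j _ => ?_
  exact continuous_norm.comp ((continuous_apply j).comp (continuous_apply i))

lemma NN_zero {n : ℕ} : NN (0 : Matrix (Fin n) (Fin n) ℂ) = 0 := by simp [NN]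

lemma dense_case {G : Type*} [Group G] [TopologicalSpace G] [IsTopologicalGroup G]
    (H : Subgroup G) (hd : Dense (H : Set G)) {n : ℕ}
    (r : ↥H →* Matrix (Fin n) (Fin n) ℂ) (hcont : Continuous r) :
    ∃ ρ : G →* Matrix (Fin n) (Fin n) ℂ, Continuous ρ ∧ ∀ h : ↥H, ρ ↑h = r h := by
  haveI : T3Space (Matrix (Fin n) (Fin n) ℂ) := inferInstanceAs (T3Space (Fin n → Fin n → ℂ))
  have di : IsDenseInducing ((↑) : ↥H → G) :=
    ⟨Topology.IsInducing.subtypeVal, by simpa [DenseRange, Subtype.range_coe_subtype] using hd⟩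
  have hex : ∀ g : G, ∃ c, Tendsto r (comap ((↑) : ↥H → G) (𝓝 g)) (𝓝 c) := by
    intro g
    set F := comap ((↑) : ↥H → G) (𝓝 g) with hF
    haveI hFne : F.NeBot := di.comap_nhds_neBot g
    have hval : Tendsto ((↑) : ↥H → G) F (𝓝 g) := tendsto_comap
    have hq : Tendsto (fun p : ↥H × ↥H => p.1 * p.2⁻¹) (F ×ˢ F) (𝓝 1) := by
      rw [tendsto_subtype_rng]
      have h2 : Tendsto (fun p : ↥H × ↥H => ((p.1 : G) * ((p.2 : G))⁻¹)) (F ×ˢ F)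
          (𝓝 (g * g⁻¹)) :=
        (hval.comp tendsto_fst).mul (hval.comp tendsto_snd).inv
      simpa using h2
    have hr1 : Tendsto (fun p : ↥H × ↥H => r (p.1 * p.2⁻¹)) (F ×ˢ F) (𝓝 1) := by
      have h3 := (hcont.tendsto 1).comp hq
      rw [map_one] at h3
      exact h3
    have hNN : Tendsto (fun p : ↥H × ↥H => NN (r (p.1 * p.2⁻¹) - 1)) (F ×ˢ F) (𝓝 0) := by
      have h4 : Tendsto (fun p : ↥H × ↥H => r (p.1 * p.2⁻¹) - 1) (F ×ˢ F) (𝓝 0) := by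
        have h4' := hr1.sub (tendsto_const_nhds (x := (1 : Matrix (Fin n) (Fin n) ℂ)))
        rw [sub_self] at h4'
        exact h4'
      have h5 := (NN_continuous.tendsto 0).comp h4
      rw [NN_zero] at h5
      exact h5
    have hNN1 : Tendsto (fun p : ↥H × ↥H => NN (r (p.1 * p.2⁻¹))) (F ×ˢ F)
        (𝓝 (NN 1)) := (NN_continuous.tendsto 1).comp hr1
    -- boundedness
    obtain ⟨S₀, hS₀F, C, hCnn, hbound⟩ :
        ∃ S₀ ∈ F, ∃ C : ℝ, 0 ≤ C ∧ ∀ h ∈ S₀, NN (r h) ≤ C := by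
      have hev : {p : ↥H × ↥H | NN (r (p.1 * p.2⁻¹)) <
          NN (1 : Matrix (Fin n) (Fin n) ℂ) + 1} ∈ F ×ˢ F :=
        hNN1.eventually_lt_const (lt_add_one _)
      obtain ⟨S₁, hS₁, S₂, hS₂, hsub⟩ := Filter.mem_prod_iff.1 hev
      obtain ⟨h₀, hh₀⟩ := Filter.nonempty_of_mem (inter_mem hS₁ hS₂)
      refine ⟨S₁ ∩ S₂, inter_mem hS₁ hS₂,
        (NN (1 : Matrix (Fin n) (Fin n) ℂ) + 1) * NN (r h₀), ?_, ?_⟩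
      · exact mul_nonneg (by have := NN_nonneg (1 : Matrix (Fin n) (Fin n) ℂ); linarith)
          (NN_nonneg _)
      · intro h hh
        have hsplit : r h = r (h * h₀⁻¹) * r h₀ := by
          rw [← map_mul, inv_mul_cancel_right]
        rw [hsplit]
        refine (NN_mul_le _ _).trans ?_
        refine mul_le_mul_of_nonneg_right ?_ (NN_nonneg _)
        have hmem : ((h, h₀) : ↥H × ↥H) ∈ S₁ ×ˢ S₂ := ⟨hh.1, hh₀.2⟩
        have hlt := hsub hmem
        rw [Set.mem_setOf_eq] at hlt
        exact le_of_lt hlt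
    -- smallness
    have hsmall : ∀ ε : ℝ, 0 < ε → ∃ S ∈ F, ∀ h ∈ S, ∀ h' ∈ S, NN (r h - r h') < ε := by
      intro ε hε
      have hC1 : (0:ℝ) < C + 1 := by linarith
      have hδ : (0:ℝ) < ε / (C + 1) := div_pos hε hC1
      have hev : {p : ↥H × ↥H | NN (r (p.1 * p.2⁻¹) - 1) < ε / (C + 1)} ∈ F ×ˢ F :=
        hNN.eventually_lt_const hδ
      obtain ⟨S₃, hS₃, S₄, hS₄, hsub⟩ := Filter.mem_prod_iff.1 hev
      refine ⟨S₀ ∩ (S₃ ∩ S₄), inter_mem hS₀F (inter_mem hS₃ hS₄), ?_⟩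
      intro h hh h' hh'
      have hsplit : r h - r h' = (r (h * h'⁻¹) - 1) * r h' := by
        rw [sub_mul, one_mul, ← map_mul, inv_mul_cancel_right]
      rw [hsplit]
      calc NN ((r (h * h'⁻¹) - 1) * r h') ≤ NN (r (h * h'⁻¹) - 1) * NN (r h') :=
            NN_mul_le _ _
        _ ≤ NN (r (h * h'⁻¹) - 1) * (C + 1) := by
            refine mul_le_mul_of_nonneg_left ?_ (NN_nonneg _)
            exact (hbound h' hh'.1).trans (le_add_of_nonneg_right zero_le_one)
        _ < (ε / (C + 1)) * (C + 1) := by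
            refine mul_lt_mul_of_pos_right ?_ hC1
            have hmem : ((h, h') : ↥H × ↥H) ∈ S₃ ×ˢ S₄ := ⟨hh.2.1, hh'.2.2⟩
            have hlt := hsub hmem
            rw [Set.mem_setOf_eq] at hlt
            exact hlt
        _ = ε := div_mul_cancel₀ _ hC1.ne'
    -- entrywise Cauchy and limits
    have hlim : ∀ i j : Fin n, ∃ z : ℂ, Tendsto (fun h : ↥H => r h i j) F (𝓝 z) := by
      intro i j
      have hc : Cauchy (map (fun h : ↥H => r h i j) F) := by
        rw [Metric.cauchy_iff]
        refine ⟨Filter.NeBot.map hFne _, ?_⟩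
        intro ε hε
        obtain ⟨S, hSF, hS⟩ := hsmall ε hε
        refine ⟨(fun h : ↥H => r h i j) '' S, Filter.image_mem_map hSF, ?_⟩
        rintro a ⟨h, hh, rfl⟩ b ⟨h', hh', rfl⟩
        rw [Complex.dist_eq]
        calc ‖r h i j - r h' i j‖ = ‖(r h - r h') i j‖ := by
              simp [Matrix.sub_apply]
          _ ≤ NN (r h - r h') := NN_entry_le _ _ _
          _ < ε := hS h hh h' hh'
      obtain ⟨z, hz⟩ := CompleteSpace.complete hc
      exact ⟨z, hz⟩
    choose c hc using hlim
    refine ⟨Matrix.of c, ?_⟩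
    refine tendsto_pi_nhds.2 fun i => tendsto_pi_nhds.2 fun j => ?_
    exact hc i j
  -- build the extension
  set ρf := di.extend r with hρf
  have hρcont : Continuous ρf := di.continuous_extend hex
  have hρeq : ∀ h : ↥H, ρf ↑h = r h := fun h => di.extend_eq hcont h
  have hmulfun : (fun p : G × G => ρf (p.1 * p.2)) = fun p : G × G => ρf p.1 * ρf p.2 := by
    refine Continuous.ext_on ((hd.prod hd)) (hρcont.comp continuous_mul) ?_ ?_
    · exact Continuous.matrix_mul (hρcont.comp continuous_fst) (hρcont.comp continuous_snd)
    · rintro ⟨a, b⟩ ⟨ha, hb⟩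
      have h1 : a * b = ↑((⟨a, ha⟩ : ↥H) * (⟨b, hb⟩ : ↥H)) := rfl
      show ρf (a * b) = ρf a * ρf b
      rw [h1, hρeq, map_mul]
      have h2 := hρeq ⟨a, ha⟩
      have h3 := hρeq ⟨b, hb⟩
      exact (congrArg₂ HMul.hMul h2 h3).symm
  refine ⟨{ toFun := ρf, map_one' := ?_, map_mul' := ?_ }, hρcont, hρeq⟩
  · have h1 : (1 : G) = ↑(1 : ↥H) := rfl
    rw [h1, hρeq, map_one]
  · intro a b
    exact congrFun hmulfun (a, b)

set_option maxHeartbeats 1000000 in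
lemma closed_case {G : Type*} [Group G] [TopologicalSpace G] [IsTopologicalGroup G]
    (H : Subgroup G) (hH : H.index = 2) (x : G) (hx : x ∉ H)
    (hcl : IsClosed (H : Set G)) {n : ℕ}
    (r : ↥H →* Matrix (Fin n) (Fin n) ℂ) (hcont : Continuous r)
    (hschur : ∀ A : Matrix (Fin n) (Fin n) ℂ,
      (∀ g : ↥H, A * r g = r g * A) → ∃ c : ℂ, A = c • (1 : Matrix (Fin n) (Fin n) ℂ))
    (hnontriv : Nontrivial (Matrix (Fin n) (Fin n) ℂ))
    (ht : TwistIso H x r) :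
    ∃ ρ : G →* Matrix (Fin n) (Fin n) ℂ, Continuous ρ ∧ ∀ h : ↥H, ρ ↑h = r h := by
  obtain ⟨P, hPu, hP⟩ := ht
  have hx2 : x * x ∈ H := Subgroup.mul_self_mem_of_index_two hH x
  set a : ↥H := ⟨x * x, hx2⟩ with ha
  have key : ∀ h : ↥H, P * r h = r ⟨x * ↑h * x⁻¹, conj_mem hH hx h.2⟩ * P := fun h =>
    (hP ↑h h.2 (conj_mem hH hx h.2)).symm
  have rmul : ∀ h k : ↥H, r h * r k = r (h * k) := fun h k => (map_mul r h k).symm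
  -- the intertwiner squared, corrected by r a, commutes with the representation
  have key2 : ∀ h : ↥H, (P * P) * r h = r (a * h * a⁻¹) * (P * P) := by
    intro h
    set h' : ↥H := ⟨x * ↑h * x⁻¹, conj_mem hH hx h.2⟩ with hh'
    have e3 : (⟨x * ↑h' * x⁻¹, conj_mem hH hx h'.2⟩ : ↥H) = a * h * a⁻¹ := by
      apply Subtype.ext
      show x * (x * ↑h * x⁻¹) * x⁻¹ = (x * x) * ↑h * (x * x)⁻¹
      group
    calc P * P * r h = P * (r h' * P) := by rw [mul_assoc, key h]
      _ = (P * r h') * P := by rw [mul_assoc]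
      _ = r (a * h * a⁻¹) * (P * P) := by rw [key h', e3, mul_assoc (r (a * h * a⁻¹)) P P]
  have hcomm : ∀ h : ↥H, (r a⁻¹ * (P * P)) * r h = r h * (r a⁻¹ * (P * P)) := by
    intro h
    have e4 : a⁻¹ * (a * h * a⁻¹) = h * a⁻¹ := by group
    calc r a⁻¹ * (P * P) * r h = r a⁻¹ * (r (a * h * a⁻¹) * (P * P)) := by
          rw [mul_assoc, key2 h]
      _ = (r a⁻¹ * r (a * h * a⁻¹)) * (P * P) := (mul_assoc _ _ _).symm
      _ = r (h * a⁻¹) * (P * P) := by rw [rmul, e4]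
      _ = (r h * r a⁻¹) * (P * P) := by rw [rmul]
      _ = r h * (r a⁻¹ * (P * P)) := by rw [mul_assoc]
  obtain ⟨c, hc⟩ := hschur (r a⁻¹ * (P * P)) hcomm
  have hAu : IsUnit (r a⁻¹ * (P * P)) := ((Group.isUnit a⁻¹).map r).mul (hPu.mul hPu)
  have hc0 : c ≠ 0 := by
    rintro rfl
    rw [zero_smul] at hc
    rw [hc] at hAu
    exact one_ne_zero (isUnit_zero_iff.1 hAu).symm
  have hP2 : P * P = c • r a := by
    have e5 : r a * (r a⁻¹ * (P * P)) = r a * (c • (1 : Matrix (Fin n) (Fin n) ℂ)) := by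
      rw [hc]
    rw [← mul_assoc, rmul, mul_inv_cancel, map_one, one_mul, mul_smul_comm, mul_one] at e5
    exact e5
  obtain ⟨s, hs⟩ := IsAlgClosed.exists_pow_nat_eq c (n := 2) two_pos
  have hs0 : s ≠ 0 := by
    rintro rfl
    apply hc0
    rw [← hs]
    ring
  set P' : Matrix (Fin n) (Fin n) ℂ := s⁻¹ • P with hP'def
  have key' : ∀ h : ↥H, P' * r h = r ⟨x * ↑h * x⁻¹, conj_mem hH hx h.2⟩ * P' := by
    intro h
    rw [hP'def, smul_mul_assoc, mul_smul_comm, key h]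
  have hP'2 : P' * P' = r a := by
    rw [hP'def, smul_mul_assoc, mul_smul_comm, smul_smul, hP2, smul_smul]
    have e6 : s⁻¹ * s⁻¹ * c = 1 := by
      rw [← hs, pow_two]
      field_simp
    rw [e6, one_smul]
  -- define the extension
  haveI : DecidablePred (· ∈ H) := fun _ => Classical.propDecidable _
  set ρf : G → Matrix (Fin n) (Fin n) ℂ := fun g =>
    if hg : g ∈ H then r ⟨g, hg⟩ else r ⟨g * x⁻¹, mul_xinv_mem hH hx hg⟩ * P' with hρf
  have hρH : ∀ (g : G) (hg : g ∈ H), ρf g = r ⟨g, hg⟩ := fun g hg => dif_pos hg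
  have hρN : ∀ (g : G) (hg : g ∉ H), ρf g = r ⟨g * x⁻¹, mul_xinv_mem hH hx hg⟩ * P' :=
    fun g hg => dif_neg hg
  have hmul : ∀ p q : G, ρf (p * q) = ρf p * ρf q := by
    intro p q
    by_cases hp : p ∈ H <;> by_cases hq : q ∈ H
    · rw [hρH _ (mul_mem hp hq), hρH _ hp, hρH _ hq, rmul]
      exact congrArg r (Subtype.ext rfl)
    · rw [hρN _ (not_mem_mul₁ hp hq), hρH _ hp, hρN _ hq, ← mul_assoc, rmul]
      refine congrArg (· * P') (congrArg r (Subtype.ext ?_))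
      show p * q * x⁻¹ = p * (q * x⁻¹)
      group
    · rw [hρN _ (not_mem_mul₂ hp hq), hρN _ hp, hρH _ hq,
        mul_assoc (r ⟨p * x⁻¹, mul_xinv_mem hH hx hp⟩) P' (r ⟨q, hq⟩), key' ⟨q, hq⟩,
        ← mul_assoc (r ⟨p * x⁻¹, mul_xinv_mem hH hx hp⟩), rmul]
      refine congrArg (· * P') (congrArg r (Subtype.ext ?_))
      show p * q * x⁻¹ = (p * x⁻¹) * (x * q * x⁻¹)
      group
    · rw [hρH _ (mem_mul_of_not_mem hH hp hq), hρN _ hp, hρN _ hq]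
      have e5 : P' * r ⟨q * x⁻¹, mul_xinv_mem hH hx hq⟩
          = r ⟨x * (q * x⁻¹) * x⁻¹, conj_mem hH hx (mul_xinv_mem hH hx hq)⟩ * P' :=
        key' ⟨q * x⁻¹, mul_xinv_mem hH hx hq⟩
      calc r ⟨p * q, mem_mul_of_not_mem hH hp hq⟩
          = r (⟨p * x⁻¹, mul_xinv_mem hH hx hp⟩ *
              (⟨x * (q * x⁻¹) * x⁻¹, conj_mem hH hx (mul_xinv_mem hH hx hq)⟩ * a)) := by
            refine congrArg r (Subtype.ext ?_)
            show p * q = (p * x⁻¹) * ((x * (q * x⁻¹) * x⁻¹) * (x * x))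
            group
        _ = r ⟨p * x⁻¹, mul_xinv_mem hH hx hp⟩ *
              (r ⟨x * (q * x⁻¹) * x⁻¹, conj_mem hH hx (mul_xinv_mem hH hx hq)⟩ * r a) := by
            rw [rmul, rmul]
        _ = r ⟨p * x⁻¹, mul_xinv_mem hH hx hp⟩ *
              (r ⟨x * (q * x⁻¹) * x⁻¹, conj_mem hH hx (mul_xinv_mem hH hx hq)⟩ *
                (P' * P')) := by rw [hP'2]
        _ = r ⟨p * x⁻¹, mul_xinv_mem hH hx hp⟩ * P' *
              (r ⟨q * x⁻¹, mul_xinv_mem hH hx hq⟩ * P') := by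
            rw [← mul_assoc (r ⟨x * (q * x⁻¹) * x⁻¹, conj_mem hH hx (mul_xinv_mem hH hx hq)⟩)
                P' P', ← e5,
              mul_assoc P' (r ⟨q * x⁻¹, mul_xinv_mem hH hx hq⟩) P',
              ← mul_assoc (r ⟨p * x⁻¹, mul_xinv_mem hH hx hp⟩) P'
                (r ⟨q * x⁻¹, mul_xinv_mem hH hx hq⟩ * P')]
  have h1m : ρf 1 = 1 := by
    rw [hρH 1 (one_mem H)]
    exact map_one r
  -- continuity
  have hcomp : (↑H : Set G)ᶜ = (fun g => g * x⁻¹) ⁻¹' (↑H : Set G) := by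
    ext g
    simp only [Set.mem_compl_iff, Set.mem_preimage, SetLike.mem_coe]
    constructor
    · exact fun hg => mul_xinv_mem hH hx hg
    · intro hg hgH
      exact inv_not_mem' hx (by simpa using mul_mem (inv_mem hgH) hg)
  have hclC : IsClosed ((↑H : Set G)ᶜ) := by
    rw [hcomp]; exact hcl.preimage (continuous_mul_right x⁻¹)
  have hopen : IsOpen (↑H : Set G) := by
    rw [← compl_compl (↑H : Set G)]; exact hclC.isOpen_compl
  have hopenC : IsOpen ((↑H : Set G)ᶜ) := hcl.isOpen_compl
  have hcH : ContinuousOn ρf (↑H : Set G) := by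
    rw [continuousOn_iff_continuous_restrict]
    have e7 : Set.restrict (↑H : Set G) ρf = fun h : ↥(↑H : Set G) => r ⟨↑h, h.2⟩ :=
      funext fun h => hρH _ h.2
    change Continuous (Set.restrict (↑H : Set G) ρf)
    rw [e7]
    exact hcont.comp (Continuous.subtype_mk continuous_subtype_val _)
  have hcC : ContinuousOn ρf ((↑H : Set G)ᶜ) := by
    rw [continuousOn_iff_continuous_restrict]
    have e8 : Set.restrict ((↑H : Set G)ᶜ) ρf
        = fun g : ↥((↑H : Set G)ᶜ) =>
          r ⟨↑g * x⁻¹, mul_xinv_mem hH hx (fun hgH => g.2 hgH)⟩ * P' :=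
      funext fun g => hρN _ (fun hgH => g.2 hgH)
    change Continuous (Set.restrict ((↑H : Set G)ᶜ) ρf)
    rw [e8]
    exact Continuous.matrix_mul
      (hcont.comp (Continuous.subtype_mk (continuous_subtype_val.mul continuous_const) _))
      continuous_const
  have hρcont : Continuous ρf := by
    rw [continuous_iff_continuousAt]
    intro g
    by_cases hg : g ∈ H
    · exact hcH.continuousAt (hopen.mem_nhds hg)
    · exact hcC.continuousAt (hopenC.mem_nhds hg)
  exact ⟨{ toFun := ρf, map_one' := h1m, map_mul' := hmul }, hρcont,
    fun h => hρH ↑h h.2⟩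


/-- For an index-two subgroup `H ⊆ G` of a topological group, `x ∈ G \ H`, and a
continuous finite-dimensional irreducible complex representation `r` of `H`, the representation
`r` extends to a continuous representation of `G` iff `r` is isomorphic to its twist `r^x`. -/
theorem stmt_2 {G : Type*} [Group G] [TopologicalSpace G] [IsTopologicalGroup G]
    (H : Subgroup G) (hH : H.index = 2) (x : G) (hx : x ∉ H)
    {n : ℕ} (r : ↥H →* Matrix (Fin n) (Fin n) ℂ)
    (hcont : Continuous r) (hirr : MatIrred r) :
    (∃ ρ : G →* Matrix (Fin n) (Fin n) ℂ, Continuous ρ ∧ ∀ h : ↥H, ρ ↑h = r h)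
      ↔ TwistIso H x r := by
  constructor
  · rintro ⟨ρ, hρc, hρr⟩
    refine ⟨ρ x, isUnit_iff_exists.2 ⟨ρ x⁻¹, ?_, ?_⟩, ?_⟩
    · rw [← map_mul, mul_inv_cancel, map_one]
    · rw [← map_mul, inv_mul_cancel, map_one]
    · intro h hh hh'
      have e1 : r ⟨x * h * x⁻¹, hh'⟩ = ρ (x * h * x⁻¹) := (hρr ⟨_, hh'⟩).symm
      have e2 : r ⟨h, hh⟩ = ρ h := (hρr ⟨h, hh⟩).symm
      rw [e1, e2, ← map_mul, ← map_mul]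
      congr 1
      group
  · intro ht
    have hdich : IsClosed (H : Set G) ∨ Dense (H : Set G) := by
      set K := H.topologicalClosure with hK
      have hle : H ≤ K := Subgroup.le_topologicalClosure H
      have hdvd : K.index ∣ 2 := hH ▸ Subgroup.index_dvd_of_le hle
      rcases (Nat.prime_two.eq_one_or_self_of_dvd _ hdvd) with h1 | h2
      · right
        have htop : K = ⊤ := Subgroup.index_eq_one.1 h1
        have : closure (H : Set G) = Set.univ := by
          have := congrArg (fun (L : Subgroup G) => (L : Set G)) htop
          simpa [hK, Subgroup.topologicalClosure_coe] using this
        rw [dense_iff_closure_eq, this]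
      · left
        have hKH : K = H := by
          have hri := Subgroup.relIndex_mul_index hle
          rw [h2, hH] at hri
          have hrel : H.relIndex K = 1 := by omega
          exact le_antisymm (Subgroup.relIndex_eq_one.1 hrel) hle
        have hic := Subgroup.isClosed_topologicalClosure H
        rw [← hK, hKH] at hic
        exact hic
    rcases hdich with hcl | hd
    · -- the Schur hypothesis
      have hnt : Nontrivial (Matrix (Fin n) (Fin n) ℂ) := by
        obtain ⟨i⟩ := hirr.1
        refine ⟨0, 1, fun h01 => ?_⟩
        have h2 := congrFun (congrFun h01 i) i
        simp [Matrix.one_apply_eq] at h2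
      exact closed_case H hH x hx hcl r hcont (schur_scalar r hirr) hnt ht
    · exact dense_case H hd r hcont
end

section
/- Let n ∈ {2, 3, 4, 6}, ζ = e^{πi/n}, and let ι : U(2) → GL₄(ℂ) be the homomorphism A ↦ diag(A, Ā). Let E_n be the subgroup of GL₄(ℂ) generated by ι(SU(2)) and z := diag(ζ, ζ, ζ̄, ζ̄), and let J(E_n) be the subgroup generated by E_n and the matrix J (the block matrix with 2×2 blocks: top-right block J₂, bottom-left block −J₂, zero diagonal blocks, where J₂ has rows (0,1) and (−1,0)); E_n has index 2 in J(E_n). For an integer k ≥ 0 and a residue class w modulo 2n with k ≡ w (mod 2), let r_{k,w} be the irreducible continuous representation of E_n determined by r_{k,w}(ι(A)·z^j) = ζ^{jw} · Sym^k(St)(A) for A ∈ SU(2) and j ∈ ℤ (this is well defined since z^n = ι(−I₂) and k ≡ w mod 2). Then the twist of r_{k,w} by conjugation by J is isomorphic to r_{k,−w}, and consequently r_{k,w} extends to a continuous representation of J(E_n) if and only if w ≡ 0 (mod 2n) or w ≡ n (mod 2n). -/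
noncomputable section

/-- The set of elements of `SU(2)`, as `2 × 2` complex matrices. -/
def SU2Set : Set (Matrix (Fin 2) (Fin 2) ℂ) := {A | star A * A = 1 ∧ A.det = 1}

/-- The group `SU(2)`, as a subgroup of `GL₂(ℂ)`. -/
def SU2 : Subgroup (Matrix (Fin 2) (Fin 2) ℂ)ˣ :=
  Subgroup.closure {u | (u : Matrix (Fin 2) (Fin 2) ℂ) ∈ SU2Set}

/-- The embedding `ι : U(2) → GL₄(ℂ)`, `A ↦ diag(A, Ā)` (as a map of matrices). -/
def iotaMat (A : Matrix (Fin 2) (Fin 2) ℂ) : Matrix (Fin 4) (Fin 4) ℂ :=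
  Matrix.reindex finSumFinEquiv finSumFinEquiv
    (Matrix.fromBlocks A 0 0 (A.map (starRingEnd ℂ)))

/-- `ζ = e^{πi/n}`. -/
def zeta (n : ℕ) : ℂ := Complex.exp (Real.pi * Complex.I / n)

/-- The diagonal matrix `z = diag(ζ, ζ, ζ̄, ζ̄)`. -/
def zMat (n : ℕ) : Matrix (Fin 4) (Fin 4) ℂ :=
  Matrix.diagonal ![zeta n, zeta n, starRingEnd ℂ (zeta n), starRingEnd ℂ (zeta n)]

/-- The matrix `J₂`. -/
def J2Mat : Matrix (Fin 2) (Fin 2) ℂ := !![0, 1; -1, 0]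

/-- The matrix `J ∈ GL₄(ℂ)`, with blocks `J = [[0, J₂], [-J₂, 0]]`. -/
def JMat : Matrix (Fin 4) (Fin 4) ℂ :=
  Matrix.reindex finSumFinEquiv finSumFinEquiv (Matrix.fromBlocks 0 J2Mat (-J2Mat) 0)

/-- The subgroup `E_n = ⟨ι(SU(2)), z⟩` of `GL₄(ℂ)`. -/
def EnGrp (n : ℕ) : Subgroup (Matrix (Fin 4) (Fin 4) ℂ)ˣ :=
  Subgroup.closure
    ({u : (Matrix (Fin 4) (Fin 4) ℂ)ˣ | (u : Matrix (Fin 4) (Fin 4) ℂ) ∈ iotaMat '' SU2Set} ∪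
     {u : (Matrix (Fin 4) (Fin 4) ℂ)ˣ | (u : Matrix (Fin 4) (Fin 4) ℂ) = zMat n})

/-- The subgroup `J(E_n) = ⟨E_n, J⟩` of `GL₄(ℂ)`. -/
def JEnGrp (n : ℕ) : Subgroup (Matrix (Fin 4) (Fin 4) ℂ)ˣ :=
  Subgroup.closure
    ({u : (Matrix (Fin 4) (Fin 4) ℂ)ˣ | (u : Matrix (Fin 4) (Fin 4) ℂ) ∈ iotaMat '' SU2Set} ∪
     {u : (Matrix (Fin 4) (Fin 4) ℂ)ˣ | (u : Matrix (Fin 4) (Fin 4) ℂ) = zMat n} ∪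
     {u : (Matrix (Fin 4) (Fin 4) ℂ)ˣ | (u : Matrix (Fin 4) (Fin 4) ℂ) = JMat})

/- STATEMENT 11: let `n ∈ {2,3,4,6}`, `ζ = e^{πi/n}`, `E_n = ⟨ι(SU(2)), z⟩` and
`J(E_n) = ⟨E_n, J⟩` (so `E_n` has index 2 in `J(E_n)`, hypothesis `hidx`).  Let `sym` be the
`(k+1)`-dimensional irreducible continuous representation `Sym^k(St)` of `SU(2)`, and for an
integer `w` with `k ≡ w (mod 2)` let `r = r_{k,w}` and `r' = r_{k,-w}` be the irreducible
continuous representations of `E_n` determined by `r_{k,±w}(ι(A)·z^j) = ζ^{±jw}·Sym^k(St)(A)`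
(hypotheses `hr`, `hr'`).  Then the twist of `r_{k,w}` by conjugation by `J` is isomorphic to
`r_{k,-w}`, and `r_{k,w}` extends to a continuous representation of `J(E_n)` if and only if
`w ≡ 0 (mod 2n)` or `w ≡ n (mod 2n)`. -/
namespace Stmt11

open Matrix

abbrev M2 := Matrix (Fin 2) (Fin 2) ℂ
abbrev M4 := Matrix (Fin 4) (Fin 4) ℂ

/-! ### Block algebra -/

def blkD (B C : M2) : M4 :=
  Matrix.reindex finSumFinEquiv finSumFinEquiv (Matrix.fromBlocks B 0 0 C)
def blkA (B C : M2) : M4 :=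
  Matrix.reindex finSumFinEquiv finSumFinEquiv (Matrix.fromBlocks 0 B C 0)

theorem blkD_mul (B C B' C' : M2) : blkD B C * blkD B' C' = blkD (B * B') (C * C') := by
  simp only [blkD, Matrix.reindex_apply, Matrix.submatrix_mul_equiv, Matrix.fromBlocks_multiply]
  simp

theorem blkD_mul_blkA (B C B' C' : M2) : blkD B C * blkA B' C' = blkA (B * B') (C * C') := by
  simp only [blkD, blkA, Matrix.reindex_apply, Matrix.submatrix_mul_equiv,
    Matrix.fromBlocks_multiply]
  simp

theorem blkA_mul_blkD (B C B' C' : M2) : blkA B C * blkD B' C' = blkA (B * C') (C * B') := by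
  simp only [blkD, blkA, Matrix.reindex_apply, Matrix.submatrix_mul_equiv,
    Matrix.fromBlocks_multiply]
  simp

theorem blkA_mul_blkA (B C B' C' : M2) : blkA B C * blkA B' C' = blkD (B * C') (C * B') := by
  simp only [blkD, blkA, Matrix.reindex_apply, Matrix.submatrix_mul_equiv,
    Matrix.fromBlocks_multiply]
  simp

theorem blkD_one : blkD 1 1 = 1 := by
  simp [blkD, Matrix.fromBlocks_one, Matrix.reindex_apply, Matrix.submatrix_one_equiv]

theorem blkD_inj {B C B' C' : M2} (h : blkD B C = blkD B' C') : B = B' ∧ C = C' := by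
  have h2 : Matrix.fromBlocks B 0 0 C = Matrix.fromBlocks B' 0 0 C' :=
    (Matrix.reindex finSumFinEquiv finSumFinEquiv).injective h
  constructor
  · have := congrArg Matrix.toBlocks₁₁ h2; simpa using this
  · have := congrArg Matrix.toBlocks₂₂ h2; simpa using this

theorem iotaMat_eq (A : M2) : iotaMat A = blkD A (A.map (starRingEnd ℂ)) := rfl

theorem JMat_eq : JMat = blkA J2Mat (-J2Mat) := rfl

theorem J2_mul_J2 : J2Mat * J2Mat = -1 := by
  ext i j
  fin_cases i <;> fin_cases j <;> simp [Matrix.mul_apply, Fin.sum_univ_two, J2Mat]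

theorem JMat_mul_JMat : JMat * JMat = 1 := by
  rw [JMat_eq, blkA_mul_blkA]
  have h1 : J2Mat * -J2Mat = 1 := by rw [Matrix.mul_neg, J2_mul_J2]; simp
  have h2 : -J2Mat * J2Mat = 1 := by rw [Matrix.neg_mul, J2_mul_J2]; simp
  rw [h1, h2, blkD_one]

theorem zMat_eq (n : ℕ) :
    zMat n = blkD (zeta n • 1) (starRingEnd ℂ (zeta n) • 1) := by
  have e0 : finSumFinEquiv.symm (0 : Fin 4) = (Sum.inl 0 : Fin 2 ⊕ Fin 2) := by decide
  have e1 : finSumFinEquiv.symm (1 : Fin 4) = (Sum.inl 1 : Fin 2 ⊕ Fin 2) := by decide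
  have e2 : finSumFinEquiv.symm (2 : Fin 4) = (Sum.inr 0 : Fin 2 ⊕ Fin 2) := by decide
  have e3 : finSumFinEquiv.symm (3 : Fin 4) = (Sum.inr 1 : Fin 2 ⊕ Fin 2) := by decide
  ext i j
  fin_cases i <;> fin_cases j <;>
    simp [zMat, blkD, Matrix.reindex_apply, Matrix.submatrix_apply, e0, e1, e2, e3,
      Matrix.diagonal, Matrix.fromBlocks, Matrix.one_apply]

/-! ### zeta facts -/

theorem zeta_ne_zero (n : ℕ) : zeta n ≠ 0 := Complex.exp_ne_zero _

theorem conj_zeta (n : ℕ) : starRingEnd ℂ (zeta n) = (zeta n)⁻¹ := by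
  rw [zeta, ← Complex.exp_conj, ← Complex.exp_neg]
  congr 1
  simp [map_div₀, Complex.conj_I]
  ring

theorem zeta_pow_two_n {n : ℕ} (hn : n ≠ 0) : zeta n ^ (2 * n) = 1 := by
  rw [zeta, ← Complex.exp_nat_mul]
  rw [show ((2 * n : ℕ) : ℂ) * (Real.pi * Complex.I / n) = 2 * Real.pi * Complex.I by
    have : (n : ℂ) ≠ 0 := Nat.cast_ne_zero.mpr hn
    push_cast
    field_simp]
  exact Complex.exp_two_pi_mul_I

theorem zeta_zpow_two_n {n : ℕ} (hn : n ≠ 0) : zeta n ^ ((2 * n : ℕ) : ℤ) = 1 := by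
  rw [zpow_natCast]; exact zeta_pow_two_n hn

theorem zeta_zpow_congr {n : ℕ} (hn : n ≠ 0) {X Y : ℤ} (h : ((2 * n : ℕ) : ℤ) ∣ X - Y) :
    zeta n ^ X = zeta n ^ Y := by
  obtain ⟨t, ht⟩ := h
  have hX : X = Y + ((2 * n : ℕ) : ℤ) * t := by linarith
  rw [hX, zpow_add₀ (zeta_ne_zero n), _root_.zpow_mul, zeta_zpow_two_n hn, _root_.one_zpow, mul_one]

/-! ### SU2 facts -/

theorem SU2Set.one_mem : (1 : M2) ∈ SU2Set := by constructor <;> simp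

theorem SU2Set.mul_mem {A B : M2} (hA : A ∈ SU2Set) (hB : B ∈ SU2Set) : A * B ∈ SU2Set := by
  obtain ⟨hA1, hA2⟩ := hA; obtain ⟨hB1, hB2⟩ := hB
  constructor
  · rw [StarMul.star_mul, mul_assoc, ← mul_assoc (star A), hA1, one_mul, hB1]
  · rw [Matrix.det_mul, hA2, hB2, one_mul]

theorem SU2Set.mul_star {A : M2} (hA : A ∈ SU2Set) : A * star A = 1 :=
  mul_eq_one_comm.mpr hA.1

theorem SU2Set.star_mem {A : M2} (hA : A ∈ SU2Set) : star A ∈ SU2Set := by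
  constructor
  · rw [star_star]; exact SU2Set.mul_star hA
  · rw [Matrix.star_eq_conjTranspose, Matrix.det_conjTranspose, hA.2]; simp

theorem SU2Set.star_eq_adjugate {A : M2} (hA : A ∈ SU2Set) : star A = A.adjugate := by
  have h1 : A⁻¹ = star A := Matrix.inv_eq_left_inv hA.1
  rw [← h1, Matrix.inv_def, hA.2]
  simp

/-- key identity: `J₂ * Ā = A * J₂` for `A ∈ SU(2)`. -/
theorem SU2Set.J2_conj {A : M2} (hA : A ∈ SU2Set) :
    J2Mat * A.map (starRingEnd ℂ) = A * J2Mat := by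
  have h := SU2Set.star_eq_adjugate hA
  rw [Matrix.adjugate_fin_two] at h
  have h00 : starRingEnd ℂ (A 0 0) = A 1 1 := by
    have := congrFun (congrFun h 0) 0
    simpa [Matrix.star_eq_conjTranspose, Matrix.conjTranspose_apply] using this
  have h10 : starRingEnd ℂ (A 0 1) = -A 1 0 := by
    have := congrFun (congrFun h 1) 0
    simpa [Matrix.star_eq_conjTranspose, Matrix.conjTranspose_apply] using this
  have h01 : starRingEnd ℂ (A 1 0) = -A 0 1 := by
    have := congrFun (congrFun h 0) 1
    simpa [Matrix.star_eq_conjTranspose, Matrix.conjTranspose_apply] using this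
  have h11 : starRingEnd ℂ (A 1 1) = A 0 0 := by
    have := congrFun (congrFun h 1) 1
    simpa [Matrix.star_eq_conjTranspose, Matrix.conjTranspose_apply] using this
  ext i j
  fin_cases i <;> fin_cases j <;>
    simp [Matrix.mul_apply, Fin.sum_univ_two, J2Mat, Matrix.map_apply, h00, h10, h01, h11]

theorem SU2Set.J2_conj' {A : M2} (hA : A ∈ SU2Set) :
    J2Mat * A = A.map (starRingEnd ℂ) * J2Mat := by
  have h := congrArg (Matrix.map · (starRingEnd ℂ)) (SU2Set.J2_conj hA)
  simp only [Matrix.map_mul] at h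
  have hJ : J2Mat.map (starRingEnd ℂ) = J2Mat := by
    ext i j; fin_cases i <;> fin_cases j <;> simp [J2Mat]
  have hAA : (A.map (starRingEnd ℂ)).map (starRingEnd ℂ) = A := by
    ext i j; simp [Matrix.map_apply]
  rw [hJ, hAA] at h
  exact h

/-! ### `iotaMat`, `zMat`, `JMat` relations -/

theorem iotaMat_mul (A B : M2) : iotaMat A * iotaMat B = iotaMat (A * B) := by
  rw [iotaMat_eq, iotaMat_eq, iotaMat_eq, blkD_mul, ← Matrix.map_mul]

theorem iotaMat_one : iotaMat 1 = 1 := by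
  rw [iotaMat_eq]
  rw [show (1 : M2).map (starRingEnd ℂ) = 1 from Matrix.map_one _ (map_zero _) (map_one _)]
  exact blkD_one

theorem zMat_pow (n : ℕ) (j : ℕ) :
    zMat n ^ j = blkD (zeta n ^ j • 1) (starRingEnd ℂ (zeta n) ^ j • 1) := by
  induction j with
  | zero => simp [blkD_one.symm]
  | succ j ih =>
      rw [pow_succ, ih, zMat_eq, blkD_mul, smul_mul_smul_comm, smul_mul_smul_comm, one_mul,
        ← pow_succ, ← pow_succ]

theorem zMat_pow_two_n {n : ℕ} (hn : n ≠ 0) : zMat n ^ (2 * n) = 1 := by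
  rw [zMat_pow, zeta_pow_two_n hn, ← map_pow, zeta_pow_two_n hn]
  simpa using blkD_one

theorem iota_zMat_pow_comm (A : M2) (n j : ℕ) :
    iotaMat A * zMat n ^ j = zMat n ^ j * iotaMat A := by
  rw [zMat_pow, iotaMat_eq, blkD_mul, blkD_mul]
  congr 1 <;> simp [Matrix.mul_smul, Matrix.smul_mul]

theorem JMat_iota_comm {A : M2} (hA : A ∈ SU2Set) :
    JMat * iotaMat A = iotaMat A * JMat := by
  rw [JMat_eq, iotaMat_eq, blkA_mul_blkD, blkD_mul_blkA, SU2Set.J2_conj hA, Matrix.neg_mul,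
    Matrix.mul_neg, SU2Set.J2_conj' hA]

theorem zeta_pow_pred {n : ℕ} (hn : n ≠ 0) : zeta n ^ (2 * n - 1) = (zeta n)⁻¹ := by
  apply eq_inv_of_mul_eq_one_left
  rw [← pow_succ, show 2 * n - 1 + 1 = 2 * n by omega]
  exact zeta_pow_two_n hn

theorem JMat_zMat_pow {n : ℕ} (hn : n ≠ 0) (j : ℕ) :
    JMat * zMat n ^ j = zMat n ^ ((2 * n - 1) * j) * JMat := by
  rw [JMat_eq, zMat_pow, zMat_pow, blkA_mul_blkD, blkD_mul_blkA]
  have h1 : zeta n ^ ((2 * n - 1) * j) = starRingEnd ℂ (zeta n) ^ j := by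
    rw [pow_mul, zeta_pow_pred hn, conj_zeta, inv_pow]
  have h2 : starRingEnd ℂ (zeta n) ^ ((2 * n - 1) * j) = zeta n ^ j := by
    rw [conj_zeta, pow_mul, inv_pow, zeta_pow_pred hn, inv_inv]
  rw [h1, h2]
  congr 1 <;> simp [Matrix.mul_smul, Matrix.smul_mul]


/-! ### Units -/

def Junit : M4ˣ := ⟨JMat, JMat, JMat_mul_JMat, JMat_mul_JMat⟩

theorem Junit_val : (Junit : M4) = JMat := rfl

theorem Junit_sq : Junit * Junit = 1 := Units.ext JMat_mul_JMat

theorem Junit_inv : Junit⁻¹ = Junit := inv_eq_of_mul_eq_one_right Junit_sq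

theorem zMat_mul_pred {n : ℕ} (hn : n ≠ 0) : zMat n * zMat n ^ (2 * n - 1) = 1 := by
  rw [← pow_succ', show 2 * n - 1 + 1 = 2 * n by omega]
  exact zMat_pow_two_n hn

theorem zMat_pred_mul {n : ℕ} (hn : n ≠ 0) : zMat n ^ (2 * n - 1) * zMat n = 1 := by
  rw [← pow_succ, show 2 * n - 1 + 1 = 2 * n by omega]
  exact zMat_pow_two_n hn

def zUnit (n : ℕ) (hn : n ≠ 0) : M4ˣ :=
  ⟨zMat n, zMat n ^ (2 * n - 1), zMat_mul_pred hn, zMat_pred_mul hn⟩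

theorem zUnit_val {n : ℕ} (hn : n ≠ 0) : (zUnit n hn : M4) = zMat n := rfl

theorem zUnit_mem {n : ℕ} (hn : n ≠ 0) : zUnit n hn ∈ EnGrp n :=
  Subgroup.subset_closure (Or.inr rfl)

theorem Junit_mem {n : ℕ} : Junit ∈ JEnGrp n :=
  Subgroup.subset_closure (Or.inr rfl)

theorem EnGrp_le_JEnGrp (n : ℕ) : EnGrp n ≤ JEnGrp n :=
  Subgroup.closure_mono (by intro x hx; exact Or.inl hx)

/-! ### Structure lemmas -/

theorem EnGrp_decomp {n : ℕ} (hn : n ≠ 0) {u : M4ˣ} (hu : u ∈ EnGrp n) :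
    ∃ A ∈ SU2Set, ∃ j : ℕ, (u : M4) = iotaMat A * zMat n ^ j := by
  induction hu using Subgroup.closure_induction with
  | mem x hx =>
      rcases hx with ⟨A, hA, hAx⟩ | hx
      · exact ⟨A, hA, 0, by rw [pow_zero, mul_one, hAx]⟩
      · exact ⟨1, SU2Set.one_mem, 1, by rw [iotaMat_one, one_mul, pow_one, hx]⟩
  | one => exact ⟨1, SU2Set.one_mem, 0, by simp [iotaMat_one]⟩
  | mul x y hx hy ihx ihy =>
      obtain ⟨A, hA, j, hxe⟩ := ihx
      obtain ⟨B, hB, l, hye⟩ := ihy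
      refine ⟨A * B, SU2Set.mul_mem hA hB, j + l, ?_⟩
      rw [Units.val_mul, hxe, hye, mul_assoc, ← mul_assoc (zMat n ^ j), ← iota_zMat_pow_comm,
        mul_assoc (iotaMat B), ← pow_add, ← mul_assoc, iotaMat_mul]
  | inv x hx ihx =>
      obtain ⟨A, hA, j, hxe⟩ := ihx
      refine ⟨star A, SU2Set.star_mem hA, (2 * n - 1) * j, ?_⟩
      have hexp : (2 * n - 1) * j + j = 2 * n * j := by
        rw [show (2 * n - 1) * j + j = (2 * n - 1 + 1) * j by ring,
          show 2 * n - 1 + 1 = 2 * n by omega]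
      have key : (iotaMat (star A) * zMat n ^ ((2 * n - 1) * j)) * (↑x : M4) = 1 := by
        rw [hxe, mul_assoc, ← mul_assoc (zMat n ^ ((2 * n - 1) * j)), ← iota_zMat_pow_comm,
          mul_assoc (iotaMat A), ← pow_add, ← mul_assoc, iotaMat_mul, hA.1, iotaMat_one,
          one_mul, hexp, pow_mul, zMat_pow_two_n hn, one_pow]
      rw [Matrix.coe_units_inv, Matrix.inv_eq_left_inv key]

theorem SU2_lift {A : M2} (hA : A ∈ SU2Set) :
    ∃ a : ↥SU2, ((a : (Matrix (Fin 2) (Fin 2) ℂ)ˣ) : M2) = A :=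
  ⟨⟨⟨A, star A, SU2Set.mul_star hA, hA.1⟩, Subgroup.subset_closure hA⟩, rfl⟩

theorem decompE {n : ℕ} (hn : n ≠ 0) (u : ↥(EnGrp n)) :
    ∃ (a : ↥SU2) (j : ℕ),
      ((u : M4ˣ) : M4) = iotaMat ((a : (Matrix (Fin 2) (Fin 2) ℂ)ˣ) : M2) * zMat n ^ j := by
  obtain ⟨A, hA, j, he⟩ := EnGrp_decomp hn u.2
  obtain ⟨a, ha⟩ := SU2_lift hA
  exact ⟨a, j, by rw [he, ha]⟩

/-- Conjugation by `J` preserves `E_n`. -/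
theorem memC {n : ℕ} (hn : n ≠ 0) {u : M4ˣ} (hu : u ∈ EnGrp n) :
    Junit * u * Junit⁻¹ ∈ EnGrp n := by
  induction hu using Subgroup.closure_induction with
  | mem x hx =>
      rcases hx with ⟨A, hA, hAx⟩ | hx
      · have : Junit * x * Junit⁻¹ = x := by
          rw [Junit_inv]
          apply Units.ext
          show JMat * (x : M4) * JMat = (x : M4)
          rw [← hAx, JMat_iota_comm hA, mul_assoc, JMat_mul_JMat, mul_one]
        rw [this]
        exact Subgroup.subset_closure (Or.inl ⟨A, hA, hAx⟩)
      · have hxE : x ∈ EnGrp n := Subgroup.subset_closure (Or.inr hx)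
        have : Junit * x * Junit⁻¹ = x ^ (2 * n - 1) := by
          rw [Junit_inv]
          apply Units.ext
          show JMat * (x : M4) * JMat = ((x ^ (2 * n - 1) : M4ˣ) : M4)
          have h := JMat_zMat_pow hn 1
          rw [pow_one, mul_one] at h
          rw [Units.val_pow_eq_pow_val, hx, h, mul_assoc, JMat_mul_JMat, mul_one]
        rw [this]
        exact pow_mem hxE _
  | one => simpa using Subgroup.one_mem _
  | mul x y hx hy ihx ihy =>
      have : Junit * (x * y) * Junit⁻¹ = (Junit * x * Junit⁻¹) * (Junit * y * Junit⁻¹) := by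
        group
      rw [this]
      exact mul_mem ihx ihy
  | inv x hx ihx =>
      have : Junit * x⁻¹ * Junit⁻¹ = (Junit * x * Junit⁻¹)⁻¹ := by group
      rw [this]
      exact inv_mem ihx

theorem JEnGrp_decomp {n : ℕ} (hn : n ≠ 0) {x : M4ˣ} (hx : x ∈ JEnGrp n) :
    x ∈ EnGrp n ∨ x * Junit ∈ EnGrp n := by
  induction hx using Subgroup.closure_induction with
  | mem x hx =>
      rcases hx with (h | h) | h
      · exact Or.inl (Subgroup.subset_closure (Or.inl h))
      · exact Or.inl (Subgroup.subset_closure (Or.inr h))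
      · right
        have : x = Junit := Units.ext h
        rw [this, Junit_sq]
        exact Subgroup.one_mem _
  | one => exact Or.inl (Subgroup.one_mem _)
  | mul x y hx hy ihx ihy =>
      rcases ihx with ihx | ihx <;> rcases ihy with ihy | ihy
      · exact Or.inl (mul_mem ihx ihy)
      · exact Or.inr (by rw [mul_assoc]; exact mul_mem ihx ihy)
      · right
        have hxyJ : (x * Junit) * (Junit * y * Junit⁻¹) = x * y * Junit := by
          rw [Junit_inv]
          calc x * Junit * (Junit * y * Junit) = x * (Junit * Junit) * (y * Junit) := by group
            _ = x * y * Junit := by rw [Junit_sq, mul_one, mul_assoc]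
        rw [← hxyJ]
        exact mul_mem ihx (memC hn ihy)
      · left
        have hxy : (x * Junit) * (Junit * (y * Junit) * Junit⁻¹) = x * y := by
          rw [Junit_inv]
          calc x * Junit * (Junit * (y * Junit) * Junit)
              = x * (Junit * Junit) * y * (Junit * Junit) := by group
            _ = x * y := by rw [Junit_sq, mul_one, mul_one]
        rw [← hxy]
        exact mul_mem ihx (memC hn ihy)
  | inv x hx ihx =>
      rcases ihx with ihx | ihx
      · exact Or.inl (inv_mem ihx)
      · right
        have : x⁻¹ * Junit = Junit * (x * Junit)⁻¹ * Junit⁻¹ := by rw [Junit_inv]; group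
        rw [this]
        exact memC hn (inv_mem ihx)

/-! ### Entry lemmas -/

theorem blkD_entries (B C : M2) :
    (blkD B C) 0 2 = 0 ∧ (blkD B C) 0 3 = 0 ∧ (blkD B C) 1 2 = 0 ∧ (blkD B C) 1 3 = 0 ∧
    (blkD B C) 2 0 = 0 ∧ (blkD B C) 2 1 = 0 ∧ (blkD B C) 3 0 = 0 ∧ (blkD B C) 3 1 = 0 ∧
    (blkD B C) 0 0 = B 0 0 ∧ (blkD B C) 0 1 = B 0 1 ∧ (blkD B C) 1 0 = B 1 0 ∧
    (blkD B C) 1 1 = B 1 1 := by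
  have e0 : finSumFinEquiv.symm (0 : Fin 4) = (Sum.inl 0 : Fin 2 ⊕ Fin 2) := by decide
  have e1 : finSumFinEquiv.symm (1 : Fin 4) = (Sum.inl 1 : Fin 2 ⊕ Fin 2) := by decide
  have e2 : finSumFinEquiv.symm (2 : Fin 4) = (Sum.inr 0 : Fin 2 ⊕ Fin 2) := by decide
  have e3 : finSumFinEquiv.symm (3 : Fin 4) = (Sum.inr 1 : Fin 2 ⊕ Fin 2) := by decide
  refine ⟨?_, ?_, ?_, ?_, ?_, ?_, ?_, ?_, ?_, ?_, ?_, ?_⟩ <;>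
    simp [blkD, Matrix.reindex_apply, Matrix.submatrix_apply, e0, e1, e2, e3, Matrix.fromBlocks]

theorem blkA_entries (B C : M2) :
    (blkA B C) 0 0 = 0 ∧ (blkA B C) 0 1 = 0 ∧ (blkA B C) 1 0 = 0 ∧ (blkA B C) 1 1 = 0 ∧
    (blkA B C) 0 2 = B 0 0 ∧ (blkA B C) 0 3 = B 0 1 ∧ (blkA B C) 1 2 = B 1 0 ∧
    (blkA B C) 1 3 = B 1 1 := by
  have e0 : finSumFinEquiv.symm (0 : Fin 4) = (Sum.inl 0 : Fin 2 ⊕ Fin 2) := by decide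
  have e1 : finSumFinEquiv.symm (1 : Fin 4) = (Sum.inl 1 : Fin 2 ⊕ Fin 2) := by decide
  have e2 : finSumFinEquiv.symm (2 : Fin 4) = (Sum.inr 0 : Fin 2 ⊕ Fin 2) := by decide
  have e3 : finSumFinEquiv.symm (3 : Fin 4) = (Sum.inr 1 : Fin 2 ⊕ Fin 2) := by decide
  refine ⟨?_, ?_, ?_, ?_, ?_, ?_, ?_, ?_⟩ <;>
    simp [blkA, Matrix.reindex_apply, Matrix.submatrix_apply, e0, e1, e2, e3, Matrix.fromBlocks]

/-- A member of `E_n` in matrix form: `ι(A) z^j = blkD (ζ^j • A) (conj)`. -/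
theorem iota_z_blkD (n : ℕ) (A : M2) (j : ℕ) :
    iotaMat A * zMat n ^ j =
      blkD (zeta n ^ j • A) (starRingEnd ℂ (zeta n) ^ j • A.map (starRingEnd ℂ)) := by
  rw [iotaMat_eq, zMat_pow, blkD_mul]
  congr 1 <;> simp [Matrix.mul_smul]

/-- "top-left determinant" of a member of `E_n` is nonzero. -/
theorem En_val_topleft {n : ℕ} (hn : n ≠ 0) {u : M4ˣ} (hu : u ∈ EnGrp n) :
    (u : M4) 0 0 * (u : M4) 1 1 - (u : M4) 0 1 * (u : M4) 1 0 ≠ 0 := by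
  obtain ⟨A, hA, j, he⟩ := EnGrp_decomp hn hu
  rw [he, iota_z_blkD]
  obtain ⟨-, -, -, -, -, -, -, -, f00, f01, f10, f11⟩ :=
    blkD_entries (zeta n ^ j • A) (starRingEnd ℂ (zeta n) ^ j • A.map (starRingEnd ℂ))
  rw [f00, f01, f10, f11]
  have hdet : A 0 0 * A 1 1 - A 0 1 * A 1 0 = 1 := by
    rw [← Matrix.det_fin_two]; exact hA.2
  have : ∀ i j', (zeta n ^ j • A) i j' = zeta n ^ j * A i j' := fun _ _ => rfl
  simp only [this]
  have hz : zeta n ^ j ≠ 0 := pow_ne_zero _ (zeta_ne_zero n)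
  intro hcon
  apply hz
  have : zeta n ^ j * zeta n ^ j * (A 0 0 * A 1 1 - A 0 1 * A 1 0) = 0 := by
    ring_nf
    ring_nf at hcon
    linear_combination hcon
  rw [hdet, mul_one] at this
  rcases mul_eq_zero.mp this with h | h
  · exact h
  · exact h

/-- members of `E_n` vanish on the top-right block. -/
theorem En_val_topright {n : ℕ} (hn : n ≠ 0) {u : M4ˣ} (hu : u ∈ EnGrp n) :
    (u : M4) 0 2 = 0 ∧ (u : M4) 0 3 = 0 ∧ (u : M4) 1 2 = 0 ∧ (u : M4) 1 3 = 0 := by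
  obtain ⟨A, hA, j, he⟩ := EnGrp_decomp hn hu
  rw [he, iota_z_blkD]
  obtain ⟨g1, g2, g3, g4, -⟩ :=
    blkD_entries (zeta n ^ j • A) (starRingEnd ℂ (zeta n) ^ j • A.map (starRingEnd ℂ))
  exact ⟨g1, g2, g3, g4⟩

/-- anti members: matrix form `blkD B C * JMat = blkA (B * J₂) (-(C * J₂))`. -/
theorem blkD_mul_JMat (B C : M2) : blkD B C * JMat = blkA (B * J2Mat) (C * -J2Mat) := by
  rw [JMat_eq, blkD_mul_blkA]

/-- anti "top-right determinant" nonzero & top-left block vanishing. -/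
theorem anti_val {n : ℕ} (hn : n ≠ 0) {x : M4ˣ} (hx : x * Junit ∈ EnGrp n) :
    ((x : M4) 0 2 * (x : M4) 1 3 - (x : M4) 0 3 * (x : M4) 1 2 ≠ 0) ∧
    (x : M4) 0 0 = 0 ∧ (x : M4) 0 1 = 0 ∧ (x : M4) 1 0 = 0 ∧ (x : M4) 1 1 = 0 := by
  obtain ⟨A, hA, j, he⟩ := EnGrp_decomp hn hx
  have hxval : (x : M4) = iotaMat A * zMat n ^ j * JMat := by
    have h1 : ((x * Junit : M4ˣ) : M4) = iotaMat A * zMat n ^ j := he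
    have h2 : (x : M4) * JMat = iotaMat A * zMat n ^ j := by
      rw [← h1]; rfl
    calc (x : M4) = (x : M4) * JMat * JMat := by rw [mul_assoc, JMat_mul_JMat, mul_one]
      _ = iotaMat A * zMat n ^ j * JMat := by rw [h2]
  set B := zeta n ^ j • A with hB
  set C := starRingEnd ℂ (zeta n) ^ j • A.map (starRingEnd ℂ) with hC
  rw [iota_z_blkD] at hxval
  rw [hxval, blkD_mul_JMat]
  obtain ⟨a1, a2, a3, a4, a5, a6, a7, a8⟩ := blkA_entries (B * J2Mat) (C * -J2Mat)
  refine ⟨?_, a1, a2, a3, a4⟩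
  rw [a5, a6, a7, a8]
  have hBJ : ∀ i' j', (B * J2Mat) i' j' = zeta n ^ j * (A * J2Mat) i' j' := by
    intro i' j'; rw [hB, Matrix.smul_mul]; rfl
  simp only [hBJ]
  have hAJ : ∀ i', (A * J2Mat) i' 0 = -A i' 1 ∧ (A * J2Mat) i' 1 = A i' 0 := by
    intro i'
    constructor <;> simp [Matrix.mul_apply, Fin.sum_univ_two, J2Mat]
  have hdet : A 0 0 * A 1 1 - A 0 1 * A 1 0 = 1 := by
    rw [← Matrix.det_fin_two]; exact hA.2
  rw [(hAJ 0).1, (hAJ 0).2, (hAJ 1).1, (hAJ 1).2]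
  have hz : zeta n ^ j ≠ 0 := pow_ne_zero _ (zeta_ne_zero n)
  intro hcon
  apply hz
  have : zeta n ^ j * zeta n ^ j * (A 0 0 * A 1 1 - A 0 1 * A 1 0) = 0 := by
    ring_nf
    ring_nf at hcon
    linear_combination hcon
  rw [hdet, mul_one] at this
  rcases mul_eq_zero.mp this with h | h
  · exact h
  · exact h

theorem SU2_coe_mem (a : ↥SU2) : ((a : (Matrix (Fin 2) (Fin 2) ℂ)ˣ) : M2) ∈ SU2Set := by
  obtain ⟨x, hx⟩ := a
  induction hx using Subgroup.closure_induction with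
  | mem x hx => exact hx
  | one => exact SU2Set.one_mem
  | mul x y hx hy ihx ihy => rw [Units.val_mul]; exact SU2Set.mul_mem ihx ihy
  | inv x hx ihx =>
      rw [Matrix.coe_units_inv, Matrix.inv_eq_left_inv ihx.1]
      exact SU2Set.star_mem ihx

theorem JMat_conj_iota_z {n : ℕ} (hn0 : n ≠ 0) {A : M2} (hA : A ∈ SU2Set) (j : ℕ) :
    JMat * (iotaMat A * zMat n ^ j) * JMat = iotaMat A * zMat n ^ ((2 * n - 1) * j) := by
  rw [← mul_assoc, JMat_iota_comm hA, mul_assoc (iotaMat A), JMat_zMat_pow hn0 j,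
    ← mul_assoc (iotaMat A), mul_assoc _ JMat JMat, JMat_mul_JMat, mul_one]

end Stmt11

open Stmt11 in
theorem stmt_11 (n : ℕ) (hn : n = 2 ∨ n = 3 ∨ n = 4 ∨ n = 6)
    (hidx : Subgroup.relIndex (EnGrp n) (JEnGrp n) = 2)
    (k : ℕ) (w : ℤ) (hkw : Int.ModEq 2 (k : ℤ) w)
    (sym : ↥SU2 →* Matrix (Fin (k + 1)) (Fin (k + 1)) ℂ)
    (hcs : Continuous sym) (his : MatIrred sym)
    (r : ↥(EnGrp n) →* Matrix (Fin (k + 1)) (Fin (k + 1)) ℂ) (hcr : Continuous r)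
    (hr : ∀ (u : ↥(EnGrp n)) (a : ↥SU2) (j : ℕ),
      ((u : (Matrix (Fin 4) (Fin 4) ℂ)ˣ) : Matrix (Fin 4) (Fin 4) ℂ)
        = iotaMat ((a : (Matrix (Fin 2) (Fin 2) ℂ)ˣ) : Matrix (Fin 2) (Fin 2) ℂ) * zMat n ^ j →
      r u = (zeta n ^ ((j : ℤ) * w)) • sym a)
    (r' : ↥(EnGrp n) →* Matrix (Fin (k + 1)) (Fin (k + 1)) ℂ) (hcr' : Continuous r')
    (hr' : ∀ (u : ↥(EnGrp n)) (a : ↥SU2) (j : ℕ),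
      ((u : (Matrix (Fin 4) (Fin 4) ℂ)ˣ) : Matrix (Fin 4) (Fin 4) ℂ)
        = iotaMat ((a : (Matrix (Fin 2) (Fin 2) ℂ)ˣ) : Matrix (Fin 2) (Fin 2) ℂ) * zMat n ^ j →
      r' u = (zeta n ^ ((j : ℤ) * (-w))) • sym a) :
    (∃ e : ((Fin (k + 1)) → ℂ) ≃ₗ[ℂ] ((Fin (k + 1)) → ℂ),
      ∀ u u' : ↥(EnGrp n),
        JMat * ((u : (Matrix (Fin 4) (Fin 4) ℂ)ˣ) : Matrix (Fin 4) (Fin 4) ℂ)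
          = ((u' : (Matrix (Fin 4) (Fin 4) ℂ)ˣ) : Matrix (Fin 4) (Fin 4) ℂ) * JMat →
        ∀ v : (Fin (k + 1)) → ℂ, e ((r u').mulVec v) = (r' u).mulVec (e v)) ∧
    ((∃ ρ : ↥(JEnGrp n) →* Matrix (Fin (k + 1)) (Fin (k + 1)) ℂ,
        Continuous ρ ∧ ∀ (x : ↥(JEnGrp n)) (u : ↥(EnGrp n)),
          (x : (Matrix (Fin 4) (Fin 4) ℂ)ˣ) = (u : (Matrix (Fin 4) (Fin 4) ℂ)ˣ) →
          ρ x = r u) ↔ (Int.ModEq (2 * n) w 0 ∨ Int.ModEq (2 * n) w n)) := by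
  classical
  have hn0 : n ≠ 0 := by rcases hn with h | h | h | h <;> omega
  -- the conjugated decomposition
  have hconj : ∀ u u' : ↥(EnGrp n),
      ((u' : M4ˣ) : M4) = JMat * ((u : M4ˣ) : M4) * JMat →
      ∀ a : ↥SU2, ∀ j : ℕ,
        ((u : M4ˣ) : M4) = iotaMat ((a : M2ˣ) : M2) * zMat n ^ j →
        ((u' : M4ˣ) : M4) = iotaMat ((a : M2ˣ) : M2) * zMat n ^ ((2 * n - 1) * j) := by
    intro u u' h a j hu
    rw [h, hu, JMat_conj_iota_z hn0 (SU2_coe_mem a) j]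
  -- Part A : the twist intertwines, via the identity map
  have twist : ∀ u u' : ↥(EnGrp n),
      JMat * ((u : M4ˣ) : M4) = ((u' : M4ˣ) : M4) * JMat → r u' = r' u := by
    intro u u' h
    obtain ⟨a, j, hu⟩ := decompE hn0 u
    have h2 : ((u' : M4ˣ) : M4) = JMat * ((u : M4ˣ) : M4) * JMat := by
      rw [h, mul_assoc, JMat_mul_JMat, mul_one]
    have hu' := hconj u u' h2 a j hu
    rw [hr u' a _ hu', hr' u a j hu]
    congr 1
    apply zeta_zpow_congr hn0
    refine ⟨(j : ℤ) * w, ?_⟩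
    rw [Nat.cast_mul, Nat.cast_sub (show 1 ≤ 2 * n by omega)]
    push_cast
    ring
  constructor
  · refine ⟨LinearEquiv.refl ℂ _, ?_⟩
    intro u u' h v
    simp only [LinearEquiv.refl_apply]
    rw [twist u u' h]
  -- Part B : the extension criterion
  constructor
  · -- forward direction
    rintro ⟨ρ, hρc, hρext⟩
    set zE : ↥(EnGrp n) := ⟨zUnit n hn0, zUnit_mem hn0⟩ with hzE
    set zJ : ↥(JEnGrp n) := ⟨zUnit n hn0, EnGrp_le_JEnGrp n (zUnit_mem hn0)⟩ with hzJ
    set JJ : ↥(JEnGrp n) := ⟨Junit, Junit_mem⟩ with hJJ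
    have h1 : r zE = (zeta n ^ (((1 : ℕ) : ℤ) * w)) • (1 : Matrix (Fin (k+1)) (Fin (k+1)) ℂ) := by
      have := hr zE 1 1 (by
        show zMat n = iotaMat (((1 : ↥SU2) : M2ˣ) : M2) * zMat n ^ 1
        rw [OneMemClass.coe_one, Units.val_one, iotaMat_one, one_mul, pow_one])
      rw [this, map_one]
    have h2 : r (zE ^ (2 * n - 1)) =
        (zeta n ^ (((2 * n - 1 : ℕ) : ℤ) * w)) • (1 : Matrix (Fin (k+1)) (Fin (k+1)) ℂ) := by
      have := hr (zE ^ (2 * n - 1)) 1 (2 * n - 1) (by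
        show ((((zE : M4ˣ)) ^ (2 * n - 1) : M4ˣ) : M4) = _
        rw [OneMemClass.coe_one, Units.val_one, iotaMat_one, one_mul,
          Units.val_pow_eq_pow_val]
        rfl)
      rw [this, map_one]
    have hcoe : ((JJ * zJ * JJ⁻¹ : ↥(JEnGrp n)) : M4ˣ) = ((zE ^ (2 * n - 1) : ↥(EnGrp n)) : M4ˣ) := by
      show Junit * zUnit n hn0 * Junit⁻¹ = (zUnit n hn0) ^ (2 * n - 1)
      rw [Junit_inv]
      apply Units.ext
      show JMat * zMat n * JMat = (((zUnit n hn0) ^ (2 * n - 1) : M4ˣ) : M4)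
      rw [Units.val_pow_eq_pow_val]
      have h := JMat_zMat_pow hn0 1
      rw [pow_one, mul_one] at h
      rw [h, mul_assoc, JMat_mul_JMat, mul_one]
      rfl
    have hρ1 : ρ (JJ * zJ * JJ⁻¹) = r (zE ^ (2 * n - 1)) := hρext _ _ hcoe
    have hρ2 : ρ (JJ * zJ * JJ⁻¹) = ρ JJ * ρ zJ * ρ JJ⁻¹ := by rw [map_mul, map_mul]
    have hρz : ρ zJ = r zE := hρext zJ zE rfl
    have hJJinv : ρ JJ * ρ JJ⁻¹ = 1 := by rw [← map_mul, mul_inv_cancel, map_one]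
    have hscal : (zeta n ^ (((2 * n - 1 : ℕ) : ℤ) * w)) • (1 : Matrix (Fin (k+1)) (Fin (k+1)) ℂ)
        = (zeta n ^ (((1 : ℕ) : ℤ) * w)) • 1 := by
      rw [← h2, ← hρ1, hρ2, hρz, h1, mul_smul_comm, smul_mul_assoc, mul_one, hJJinv]
    have hentry : zeta n ^ (((2 * n - 1 : ℕ) : ℤ) * w) = zeta n ^ (((1 : ℕ) : ℤ) * w) := by
      have := congrFun (congrFun hscal 0) 0
      simpa [Matrix.smul_apply, Matrix.one_apply_eq] using this
    have hd : zeta n ^ (((2 * n : ℕ) : ℤ) * w) = 1 := by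
      rw [_root_.zpow_mul, zeta_zpow_two_n hn0, _root_.one_zpow]
    have hz2 : zeta n ^ ((2 * w : ℤ)) = 1 := by
      have hsum : zeta n ^ ((2 * w : ℤ)) * zeta n ^ (((2 * n - 1 : ℕ) : ℤ) * w)
          = zeta n ^ (((2 * n : ℕ) : ℤ) * w) * zeta n ^ (((1 : ℕ) : ℤ) * w) := by
        rw [← zpow_add₀ (zeta_ne_zero n), ← zpow_add₀ (zeta_ne_zero n)]
        congr 1
        rw [Nat.cast_sub (show 1 ≤ 2 * n by omega)]
        push_cast
        ring
      rw [hentry, hd] at hsum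
      exact mul_right_cancel₀ (zpow_ne_zero _ (zeta_ne_zero n)) hsum
    have hexp : Complex.exp (((2 * w : ℤ) : ℂ) * (Real.pi * Complex.I / n)) = 1 := by
      rw [Complex.exp_int_mul, ← zeta]
      exact hz2
    obtain ⟨m, hm⟩ := Complex.exp_eq_one_iff.mp hexp
    have hπ0 : (Real.pi : ℂ) ≠ 0 := Complex.ofReal_ne_zero.mpr Real.pi_ne_zero
    have hI0 : Complex.I ≠ 0 := Complex.I_ne_zero
    have hnC : (n : ℂ) ≠ 0 := Nat.cast_ne_zero.mpr hn0
    have hwm : w = m * n := by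
      have : ((w : ℂ)) = ((m * n : ℤ) : ℂ) := by
        push_cast
        push_cast at hm
        field_simp at hm
        have h2πI : (2 : ℂ) * (Real.pi : ℂ) * Complex.I ≠ 0 := by
          simp [hπ0, hI0, Complex.ext_iff]
        apply mul_left_cancel₀ h2πI
        linear_combination (2 * (Real.pi : ℂ) * Complex.I) * hm
      exact_mod_cast this
    rcases Int.even_or_odd m with ⟨q, hq⟩ | ⟨q, hq⟩
    · left
      refine Int.modEq_iff_dvd.mpr ⟨-q, ?_⟩
      rw [hwm, hq]
      push_cast
      ring
    · right
      refine Int.modEq_iff_dvd.mpr ⟨-q, ?_⟩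
      rw [hwm, hq]
      push_cast
      ring
  · -- backward direction : construct the extension
    intro hw
    have hndvd : (n : ℤ) ∣ w := by
      rcases hw with h | h
      · obtain ⟨t, ht⟩ := Int.ModEq.dvd h
        exact ⟨-2 * t, by push_cast at ht ⊢; linarith⟩
      · obtain ⟨t, ht⟩ := Int.ModEq.dvd h
        exact ⟨1 - 2 * t, by push_cast at ht ⊢; linarith⟩
    obtain ⟨m, hm⟩ := hndvd
    -- the key invariance of r under conjugation by J
    have hKey : ∀ u u' : ↥(EnGrp n),
        ((u' : M4ˣ) : M4) = JMat * ((u : M4ˣ) : M4) * JMat → r u' = r u := by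
      intro u u' h
      obtain ⟨a, j, hu⟩ := decompE hn0 u
      have hu' := hconj u u' h a j hu
      rw [hr u' a _ hu', hr u a j hu]
      congr 1
      apply zeta_zpow_congr hn0
      refine ⟨((n : ℤ) - 1) * j * m, ?_⟩
      rw [Nat.cast_mul, Nat.cast_sub (show 1 ≤ 2 * n by omega), hm]
      push_cast
      ring
    have hmemJ : ∀ {x : M4ˣ}, x ∈ JEnGrp n → x ∉ EnGrp n → x * Junit ∈ EnGrp n :=
      fun hx hnx => (JEnGrp_decomp hn0 hx).resolve_left hnx
    set π : ↥(JEnGrp n) → ↥(EnGrp n) := fun x =>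
      if h : (x : M4ˣ) ∈ EnGrp n then ⟨(x : M4ˣ), h⟩
      else ⟨(x : M4ˣ) * Junit, hmemJ x.2 h⟩ with hπ
    have hπval : ∀ (x : ↥(JEnGrp n)) (h : (x : M4ˣ) ∈ EnGrp n), π x = ⟨(x : M4ˣ), h⟩ := by
      intro x h; simp only [hπ, dif_pos h]
    have hπval' : ∀ (x : ↥(JEnGrp n)) (h : (x : M4ˣ) ∉ EnGrp n),
        π x = ⟨(x : M4ˣ) * Junit, hmemJ x.2 h⟩ := by
      intro x h; simp only [hπ, dif_neg h]
    -- the J-conjugate of an element of E_n, as an element of E_n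
    have hconjval : ∀ (y : M4ˣ) (hy : y ∈ EnGrp n),
        (((⟨Junit * y * Junit⁻¹, memC hn0 hy⟩ : ↥(EnGrp n)) : M4ˣ) : M4) = JMat * (y : M4) * JMat := by
      intro y hy
      show ((Junit * y * Junit⁻¹ : M4ˣ) : M4) = JMat * (y : M4) * JMat
      rw [Junit_inv]
      rfl
    -- multiplicativity
    have hmul : ∀ x y : ↥(JEnGrp n), r (π (x * y)) = r (π x) * r (π y) := by
      intro x y
      by_cases hx : (x : M4ˣ) ∈ EnGrp n <;> by_cases hy : (y : M4ˣ) ∈ EnGrp n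
      · have hxy : ((x * y : ↥(JEnGrp n)) : M4ˣ) ∈ EnGrp n := mul_mem hx hy
        rw [hπval _ hxy, hπval x hx, hπval y hy, ← map_mul]
        exact congrArg r (Subtype.ext rfl)
      · have hxy : ((x * y : ↥(JEnGrp n)) : M4ˣ) ∉ EnGrp n := by
          intro h
          exact hy (by
            have : (y : M4ˣ) = (x : M4ˣ)⁻¹ * ((x * y : ↥(JEnGrp n)) : M4ˣ) := by
              show (y : M4ˣ) = (x : M4ˣ)⁻¹ * ((x : M4ˣ) * (y : M4ˣ))
              rw [inv_mul_cancel_left]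
            rw [this]
            exact mul_mem (inv_mem hx) h)
        rw [hπval' _ hxy, hπval x hx, hπval' y hy, ← map_mul]
        apply congrArg r
        apply Subtype.ext
        show ((x : M4ˣ) * (y : M4ˣ)) * Junit = (x : M4ˣ) * ((y : M4ˣ) * Junit)
        rw [mul_assoc]
      · have hxy : ((x * y : ↥(JEnGrp n)) : M4ˣ) ∉ EnGrp n := by
          intro h
          exact hx (by
            have : (x : M4ˣ) = ((x * y : ↥(JEnGrp n)) : M4ˣ) * (y : M4ˣ)⁻¹ := by
              show (x : M4ˣ) = ((x : M4ˣ) * (y : M4ˣ)) * (y : M4ˣ)⁻¹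
              rw [mul_inv_cancel_right]
            rw [this]
            exact mul_mem h (inv_mem hy))
        set yc : ↥(EnGrp n) := ⟨Junit * (y : M4ˣ) * Junit⁻¹, memC hn0 hy⟩ with hyc
        have hKyc : r yc = r ⟨(y : M4ˣ), hy⟩ := hKey ⟨(y : M4ˣ), hy⟩ yc (hconjval _ hy)
        have helt : (⟨((x * y : ↥(JEnGrp n)) : M4ˣ) * Junit, hmemJ (x * y).2 hxy⟩ : ↥(EnGrp n))
            = ⟨(x : M4ˣ) * Junit, hmemJ x.2 hx⟩ * yc := by
          apply Subtype.ext
          show ((x : M4ˣ) * (y : M4ˣ)) * Junit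
            = ((x : M4ˣ) * Junit) * (Junit * (y : M4ˣ) * Junit⁻¹)
          rw [Junit_inv]
          calc ((x : M4ˣ) * (y : M4ˣ)) * Junit
              = (x : M4ˣ) * (Junit * Junit) * ((y : M4ˣ) * Junit) := by
                rw [Junit_sq, mul_one, mul_assoc]
            _ = ((x : M4ˣ) * Junit) * (Junit * (y : M4ˣ) * Junit) := by group
        rw [hπval' _ hxy, hπval' x hx, hπval y hy, helt, map_mul, hKyc]
      · have hx' := hmemJ x.2 hx
        have hy' := hmemJ y.2 hy
        have hid : (x : M4ˣ) * (y : M4ˣ)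
            = ((x : M4ˣ) * Junit) * (Junit * ((y : M4ˣ) * Junit) * Junit⁻¹) := by
          rw [Junit_inv]
          calc (x : M4ˣ) * (y : M4ˣ)
              = (x : M4ˣ) * (Junit * Junit) * (y : M4ˣ) * (Junit * Junit) := by
                rw [Junit_sq, mul_one, mul_one]
            _ = ((x : M4ˣ) * Junit) * (Junit * ((y : M4ˣ) * Junit) * Junit) := by group
        have hxy : ((x * y : ↥(JEnGrp n)) : M4ˣ) ∈ EnGrp n := by
          show (x : M4ˣ) * (y : M4ˣ) ∈ EnGrp n
          rw [hid]
          exact mul_mem hx' (memC hn0 hy')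
        set yc : ↥(EnGrp n) := ⟨Junit * ((y : M4ˣ) * Junit) * Junit⁻¹, memC hn0 hy'⟩ with hyc
        have hKyc : r yc = r ⟨(y : M4ˣ) * Junit, hy'⟩ :=
          hKey ⟨(y : M4ˣ) * Junit, hy'⟩ yc (hconjval _ hy')
        have helt : (⟨((x * y : ↥(JEnGrp n)) : M4ˣ), hxy⟩ : ↥(EnGrp n))
            = ⟨(x : M4ˣ) * Junit, hx'⟩ * yc := Subtype.ext hid
        rw [hπval _ hxy, hπval' x hx, hπval' y hy, helt, map_mul, hKyc]
    have hone' : ((1 : ↥(JEnGrp n)) : M4ˣ) ∈ EnGrp n := by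
      rw [OneMemClass.coe_one]; exact one_mem _
    set ρ : ↥(JEnGrp n) →* Matrix (Fin (k + 1)) (Fin (k + 1)) ℂ :=
      { toFun := fun x => r (π x)
        map_one' := by
          show r (π 1) = 1
          rw [hπval 1 hone']
          have : (⟨((1 : ↥(JEnGrp n)) : M4ˣ), hone'⟩ : ↥(EnGrp n)) = 1 := by
            apply Subtype.ext
            rw [OneMemClass.coe_one]
            rfl
          rw [this, map_one]
        map_mul' := hmul } with hρdef
    refine ⟨ρ, ?_, ?_⟩
    · -- continuity
      rw [continuous_iff_continuousAt]
      intro x₀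
      have hval : Continuous (fun x : ↥(JEnGrp n) => ((x : M4ˣ) : M4)) :=
        Units.continuous_val.comp continuous_subtype_val
      have hentry : ∀ i j : Fin 4, Continuous (fun x : ↥(JEnGrp n) => ((x : M4ˣ) : M4) i j) :=
        fun i j => (continuous_apply j).comp ((continuous_apply i).comp hval)
      show ContinuousAt (fun x => r (π x)) x₀
      by_cases hx₀ : (x₀ : M4ˣ) ∈ EnGrp n
      · set U : Set (↥(JEnGrp n)) := {x | ((x : M4ˣ) : M4) 0 0 * ((x : M4ˣ) : M4) 1 1
            - ((x : M4ˣ) : M4) 0 1 * ((x : M4ˣ) : M4) 1 0 ≠ 0} with hU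
        have hUopen : IsOpen U := by
          have hg : Continuous (fun x : ↥(JEnGrp n) => ((x : M4ˣ) : M4) 0 0 * ((x : M4ˣ) : M4) 1 1
              - ((x : M4ˣ) : M4) 0 1 * ((x : M4ˣ) : M4) 1 0) :=
            ((hentry 0 0).mul (hentry 1 1)).sub ((hentry 0 1).mul (hentry 1 0))
          exact isOpen_compl_singleton.preimage hg
        have hU₀ : x₀ ∈ U := En_val_topleft hn0 hx₀
        have hmemU : ∀ x ∈ U, (x : M4ˣ) ∈ EnGrp n := by
          intro x hxU
          by_contra hc
          obtain ⟨-, e1, e2, e3, e4⟩ := anti_val hn0 (hmemJ x.2 hc)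
          exact hxU (by show _ - _ = (0:ℂ); rw [e1, e2, e3, e4]; ring)
        have hπc : ContinuousAt (fun x => ((π x : ↥(EnGrp n)) : M4ˣ)) x₀ := by
          apply ContinuousAt.congr (continuous_subtype_val.continuousAt)
          filter_upwards [hUopen.mem_nhds hU₀] with x hxU
          rw [hπval x (hmemU x hxU)]
        have hπc2 : ContinuousAt π x₀ := Topology.IsInducing.subtypeVal.continuousAt_iff.mpr hπc
        exact (hcr.continuousAt).comp hπc2
      · set V : Set (↥(JEnGrp n)) := {x | ((x : M4ˣ) : M4) 0 2 * ((x : M4ˣ) : M4) 1 3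
            - ((x : M4ˣ) : M4) 0 3 * ((x : M4ˣ) : M4) 1 2 ≠ 0} with hV
        have hVopen : IsOpen V := by
          have hg : Continuous (fun x : ↥(JEnGrp n) => ((x : M4ˣ) : M4) 0 2 * ((x : M4ˣ) : M4) 1 3
              - ((x : M4ˣ) : M4) 0 3 * ((x : M4ˣ) : M4) 1 2) :=
            ((hentry 0 2).mul (hentry 1 3)).sub ((hentry 0 3).mul (hentry 1 2))
          exact isOpen_compl_singleton.preimage hg
        have hV₀ : x₀ ∈ V := (anti_val hn0 (hmemJ x₀.2 hx₀)).1
        have hmemV : ∀ x ∈ V, (x : M4ˣ) ∉ EnGrp n := by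
          intro x hxV hc
          obtain ⟨e1, e2, e3, e4⟩ := En_val_topright hn0 hc
          exact hxV (by show _ - _ = (0:ℂ); rw [e1, e2, e3, e4]; ring)
        have hπc : ContinuousAt (fun x => ((π x : ↥(EnGrp n)) : M4ˣ)) x₀ := by
          apply ContinuousAt.congr ((continuous_subtype_val.mul (continuous_const : Continuous fun _ : ↥(JEnGrp n) => Junit)).continuousAt)
          filter_upwards [hVopen.mem_nhds hV₀] with x hxV
          rw [hπval' x (hmemV x hxV)]
          rfl
        have hπc2 : ContinuousAt π x₀ := Topology.IsInducing.subtypeVal.continuousAt_iff.mpr hπc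
        exact (hcr.continuousAt).comp hπc2
    · -- extension property
      intro x u h
      have hx : (x : M4ˣ) ∈ EnGrp n := h ▸ u.2
      show r (π x) = r u
      rw [hπval x hx]
      exact congrArg r (Subtype.ext h)

end
end
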